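/- arXiv:1412.7335 — 4 statements merged into one kernel-verified Lean document; each statement's English description precedes it below -/
import Mathlib

section
/- For all p, q with 0 < q ≤ p < 1, the Kullback-Leibler divergence satisfies KL(q,p) ≥ (p-q)²/(2(p+q)), where KL(q,p) = q·log(q/p) + (1-q)·log((1-q)/(1-p)). -/
/-- Binary Kullback-Leibler divergence `KL(q,p)`. -/
noncomputable def KL (q p : ℝ) : ℝ :=
  q * Real.log (q / p) + (1 - q) * Real.log ((1 - q) / (1 - p))

lemma log_quad_bound {t : ℝ} (ht : 0 < t) (ht1 : t ≤ 1) :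
    (t ^ 2 - 1) / (2 * t) ≤ Real.log t := by
  set f : ℝ → ℝ := fun x => Real.log x - x / 2 + 1 / 2 * x⁻¹ with hf
  have hd : ∀ x : ℝ, 0 < x →
      HasDerivAt f (x⁻¹ - 1 / 2 + 1 / 2 * -(x ^ 2)⁻¹) x := by
    intro x hx
    exact ((Real.hasDerivAt_log hx.ne').sub ((hasDerivAt_id x).div_const 2)).add
      ((hasDerivAt_inv hx.ne').const_mul (1 / 2))
  have hcont : ContinuousOn f (Set.Icc t 1) := by
    intro x hx
    have hx0 : 0 < x := lt_of_lt_of_le ht hx.1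
    exact ((hd x hx0).continuousAt).continuousWithinAt
  have hanti : AntitoneOn f (Set.Icc t 1) := by
    apply antitoneOn_of_deriv_nonpos (convex_Icc t 1) hcont
    · intro x hx
      rw [interior_Icc] at hx
      have hx0 : 0 < x := lt_of_lt_of_le ht hx.1.le
      exact (hd x hx0).differentiableAt.differentiableWithinAt
    intro x hx
    rw [interior_Icc] at hx
    have hx0 : 0 < x := lt_of_lt_of_le ht hx.1.le
    rw [(hd x hx0).deriv]
    have : x⁻¹ - 1 / 2 + 1 / 2 * -(x ^ 2)⁻¹ = -((x - 1) ^ 2 / (2 * x ^ 2)) := by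
      field_simp
      ring
    rw [this]
    have : (0:ℝ) ≤ (x - 1) ^ 2 / (2 * x ^ 2) := by positivity
    linarith
  have h1 : f 1 ≤ f t := hanti ⟨le_refl t, ht1⟩ ⟨ht1, le_refl 1⟩ ht1
  have hf1 : f 1 = 0 := by simp [hf]
  have hft : f t = Real.log t - t / 2 + 1 / 2 * t⁻¹ := rfl
  have he : (t ^ 2 - 1) / (2 * t) = t / 2 - 1 / 2 * t⁻¹ := by
    field_simp
  rw [hf1, hft] at h1
  rw [he]
  linarith

theorem stmt0 (p q : ℝ) (hq : 0 < q) (hqp : q ≤ p) (hp : p < 1) :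
    KL q p ≥ (p - q) ^ 2 / (2 * (p + q)) := by
  have hp0 : 0 < p := lt_of_lt_of_le hq hqp
  have hq1 : q < 1 := lt_of_le_of_lt hqp hp
  have h1p : 0 < 1 - p := by linarith
  have h1q : 0 < 1 - q := by linarith
  -- bound the first log
  have ht : 0 < q / p := div_pos hq hp0
  have ht1 : q / p ≤ 1 := (div_le_one hp0).mpr hqp
  have hA : ((q / p) ^ 2 - 1) / (2 * (q / p)) ≤ Real.log (q / p) :=
    log_quad_bound ht ht1
  have hAeq : ((q / p) ^ 2 - 1) / (2 * (q / p)) = (q ^ 2 - p ^ 2) / (2 * p * q) := by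
    field_simp
  rw [hAeq] at hA
  -- bound the second log
  have hB : 1 - (1 - p) / (1 - q) ≤ Real.log ((1 - q) / (1 - p)) := by
    have h := Real.log_le_sub_one_of_pos (show (0:ℝ) < (1 - p) / (1 - q) from div_pos h1p h1q)
    have hlog : Real.log ((1 - q) / (1 - p)) = - Real.log ((1 - p) / (1 - q)) := by
      rw [← Real.log_inv]
      congr 1
      field_simp
    rw [hlog]
    linarith
  -- combine
  have hsum : q * ((q ^ 2 - p ^ 2) / (2 * p * q)) + (1 - q) * (1 - (1 - p) / (1 - q)) ≤ KL q p := by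
    unfold KL
    have := mul_le_mul_of_nonneg_left hA hq.le
    have := mul_le_mul_of_nonneg_left hB h1q.le
    linarith
  have e1 : q * ((q ^ 2 - p ^ 2) / (2 * p * q)) + (1 - q) * (1 - (1 - p) / (1 - q))
      = (p - q) ^ 2 / (2 * p) := by
    field_simp
    ring
  rw [e1] at hsum
  have e2 : (p - q) ^ 2 / (2 * (p + q)) ≤ (p - q) ^ 2 / (2 * p) := by
    apply div_le_div_of_nonneg_left (sq_nonneg _) (by positivity)
    linarith
  linarith
end

section
/- For all p, q ∈ (0,1), KL(p,q) ≥ KL(q,p) if and only if p(1-p) ≥ q(1-q), where KL is the binary Kullback-Leibler divergence. -/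
private lemma KL_diff (p q : ℝ) (hp0 : 0 < p) (hp1 : p < 1) (hq0 : 0 < q) (hq1 : q < 1) :
    KL p q - KL q p = (p + q) * (Real.log p - Real.log q)
      + (2 - p - q) * (Real.log (1 - p) - Real.log (1 - q)) := by
  unfold KL
  rw [Real.log_div (by linarith) (by linarith), Real.log_div (by linarith) (by linarith),
      Real.log_div (by linarith) (by linarith), Real.log_div (by linarith) (by linarith)]
  ring

private lemma KL_refl_sym (p q : ℝ) : KL (1 - p) (1 - q) = KL p q := by
  unfold KL
  rw [sub_sub_cancel, sub_sub_cancel]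
  ring

private lemma Dpos (a b : ℝ) (ha0 : 0 < a) (ha1 : a < 1) (hb0 : 0 < b) (hb1 : b < 1)
    (hab : b < a) (hs : a + b < 1) :
    0 < (a + b) * (1 / a) + (2 - (a + b)) * (-1 / (1 - a))
      - (a + b) * (-1 / b) - (2 - (a + b)) * (1 / (1 - b)) := by
  have h1a : (0:ℝ) < 1 - a := by linarith
  have h1b : (0:ℝ) < 1 - b := by linarith
  have key : (a + b) * (1 / a) + (2 - (a + b)) * (-1 / (1 - a))
      - (a + b) * (-1 / b) - (2 - (a + b)) * (1 / (1 - b))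
      = (a - b) ^ 2 * (1 - (a + b)) / (a * (1 - a) * (b * (1 - b))) := by
    field_simp
    ring
  rw [key]
  apply div_pos
  · have h1 : (0:ℝ) < 1 - (a + b) := by linarith
    have h2 : (0:ℝ) < (a - b) ^ 2 := pow_pos (by linarith) 2
    exact mul_pos h2 h1
  · exact mul_pos (mul_pos ha0 h1a) (mul_pos hb0 h1b)

private lemma delta_pos (p q : ℝ) (hq0 : 0 < q) (hqp : q < p) (hp1 : p < 1)
    (hs : p + q < 1) : KL q p < KL p q := by
  have hp0 : 0 < p := lt_trans hq0 hqp
  have hq1 : q < 1 := lt_trans hqp hp1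
  set s := p + q with hs_def
  have hs0 : 0 < s := by positivity
  set F : ℝ → ℝ := fun d => s * Real.log (s/2 + d) + (2 - s) * Real.log (1 - (s/2 + d))
      - s * Real.log (s/2 - d) - (2 - s) * Real.log (1 - (s/2 - d)) with hF
  set D : ℝ → ℝ := fun d => s * (1/(s/2 + d)) + (2 - s) * (-1/(1 - (s/2 + d)))
      - s * (-1/(s/2 - d)) - (2 - s) * (1/(1 - (s/2 - d))) with hD
  set d0 : ℝ := (p - q)/2 with hd0_def
  have hd0 : 0 < d0 := by simp only [hd0_def]; linarith
  have hpd : s/2 + d0 = p := by rw [hs_def, hd0_def]; ring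
  have hqd : s/2 - d0 = q := by rw [hs_def, hd0_def]; ring
  have hbounds : ∀ d ∈ Set.Icc (0:ℝ) d0,
      0 < s/2 + d ∧ s/2 + d < 1 ∧ 0 < s/2 - d ∧ s/2 - d < 1 := by
    intro d hd
    obtain ⟨hd1, hd2⟩ := hd
    have h1 : s/2 + d ≤ p := by rw [← hpd]; linarith
    have h2 : q ≤ s/2 - d := by rw [← hqd]; linarith
    exact ⟨by linarith, by linarith, by linarith, by linarith⟩
  have hderiv : ∀ d ∈ Set.Icc (0:ℝ) d0, HasDerivAt F (D d) d := by
    intro d hd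
    obtain ⟨ha0, ha1, hb0, hb1⟩ := hbounds d hd
    have h1 : HasDerivAt (fun d : ℝ => s/2 + d) 1 d := (hasDerivAt_id d).const_add (s/2)
    have h2 : HasDerivAt (fun d : ℝ => 1 - (s/2 + d)) (-1) d := h1.const_sub 1
    have h3 : HasDerivAt (fun d : ℝ => s/2 - d) (-1) d := by
      simpa using (hasDerivAt_id d).const_sub (s/2)
    have h4 : HasDerivAt (fun d : ℝ => 1 - (s/2 - d)) (-(-1)) d := h3.const_sub 1
    have hA := (h1.log (ne_of_gt ha0)).const_mul s
    have hB := (h2.log (ne_of_gt (by linarith : (0:ℝ) < 1 - (s/2 + d)))).const_mul (2 - s)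
    have hC := (h3.log (ne_of_gt hb0)).const_mul s
    have hD4 := (h4.log (ne_of_gt (by linarith : (0:ℝ) < 1 - (s/2 - d)))).const_mul (2 - s)
    have := ((hA.add hB).sub hC).sub hD4
    convert this using 1
    · rfl
    · rfl
    · rfl
    simp only [hD]
    norm_num
  have hmono : StrictMonoOn F (Set.Icc 0 d0) := by
    apply strictMonoOn_of_deriv_pos (convex_Icc 0 d0)
    · exact fun x hx => (hderiv x hx).continuousAt.continuousWithinAt
    · intro x hx
      rw [interior_Icc] at hx
      obtain ⟨hx1, hx2⟩ := hx
      have hxm : x ∈ Set.Icc (0:ℝ) d0 := ⟨le_of_lt hx1, le_of_lt hx2⟩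
      rw [(hderiv x hxm).deriv]
      obtain ⟨ha0, ha1, hb0, hb1⟩ := hbounds x hxm
      have hlt : s/2 - x < s/2 + x := by linarith
      have hsum : (s/2 + x) + (s/2 - x) = s := by ring
      have := Dpos (s/2 + x) (s/2 - x) ha0 ha1 hb0 hb1 hlt (by rw [hsum]; linarith)
      rw [hsum] at this
      simpa [hD] using this
  have hF0 : F 0 = 0 := by simp only [hF, add_zero, sub_zero]; ring
  have hFd0 : F 0 < F d0 := hmono (Set.left_mem_Icc.mpr (le_of_lt hd0))
    (Set.right_mem_Icc.mpr (le_of_lt hd0)) hd0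
  have hFval : F d0 = s * Real.log p + (2 - s) * Real.log (1 - p)
      - s * Real.log q - (2 - s) * Real.log (1 - q) := by
    simp only [hF, hpd, hqd]
  have hdiff := KL_diff p q hp0 hp1 hq0 hq1
  rw [hF0, hFval] at hFd0
  rw [hs_def] at hFd0
  nlinarith [hFd0, hdiff]

theorem stmt1 (p q : ℝ) (hp : p ∈ Set.Ioo (0 : ℝ) 1) (hq : q ∈ Set.Ioo (0 : ℝ) 1) :
    KL p q ≥ KL q p ↔ p * (1 - p) ≥ q * (1 - q) := by
  obtain ⟨hp0, hp1⟩ := hp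
  obtain ⟨hq0, hq1⟩ := hq
  rcases lt_trichotomy (p + q) 1 with hs | hs | hs
  · -- p + q < 1
    rcases lt_trichotomy p q with h | h | h
    · -- p < q : both sides false
      have := delta_pos q p hp0 h hq1 (by linarith)
      constructor
      · intro hge; linarith
      · intro hge; nlinarith
    · subst h; simp
    · -- q < p : both sides true
      have := delta_pos p q hq0 h hp1 hs
      constructor
      · intro _; nlinarith
      · intro _; linarith
  · -- p + q = 1 : both sides equal
    have hq' : q = 1 - p := by linarith
    subst hq'
    have hdiff := KL_diff p (1 - p) hp0 hp1 (by linarith) (by linarith)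
    rw [sub_sub_cancel] at hdiff
    constructor
    · intro _; nlinarith
    · intro _; nlinarith [hdiff]
  · -- p + q > 1
    rcases lt_trichotomy p q with h | h | h
    · -- p < q : both sides true
      have := delta_pos (1 - p) (1 - q) (by linarith) (by linarith) (by linarith) (by linarith)
      rw [KL_refl_sym, KL_refl_sym] at this
      constructor
      · intro _; nlinarith
      · intro _; linarith
    · subst h; simp
    · -- q < p : both sides false
      have := delta_pos (1 - q) (1 - p) (by linarith) (by linarith) (by linarith) (by linarith)
      rw [KL_refl_sym, KL_refl_sym] at this
      constructor
      · intro hge; linarith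
      · intro hge; nlinarith
end

section
/- For all p, q ∈ (0,1), min{KL(q,p), KL(p,q)} ≥ (p-q)²/(2(p+q)), where KL is the binary Kullback-Leibler divergence. -/
lemma term_ge (a b : ℝ) (ha : 0 < a) (hb : 0 < b) :
    a * Real.log (a / b) ≥ 2 * a - 2 * Real.sqrt (a * b) := by
  set s := Real.sqrt (b / a) with hs
  have hs0 : 0 < s := Real.sqrt_pos.2 (div_pos hb ha)
  have hlog : Real.log s ≤ s - 1 := Real.log_le_sub_one_of_pos hs0
  have hsq : s ^ 2 = b / a := Real.sq_sqrt (le_of_lt (div_pos hb ha))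
  have h1 : Real.log (a / b) = -(2 * Real.log s) := by
    have hba : Real.log (b / a) = 2 * Real.log s := by
      rw [← hsq, Real.log_pow]; push_cast; ring
    rw [Real.log_div hb.ne' ha.ne'] at hba
    rw [Real.log_div ha.ne' hb.ne']
    linarith
  have has : a * s = Real.sqrt (a * b) := by
    rw [hs, ← Real.sqrt_mul_self (le_of_lt ha), ← Real.sqrt_mul (mul_self_nonneg a)]
    congr 1
    field_simp
    ring_nf; rw [Real.sq_sqrt (sq_nonneg a)]
  have : a * Real.log (a / b) ≥ a * (2 - 2 * s) := by
    rw [h1]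
    have := mul_le_mul_of_nonneg_left hlog (le_of_lt ha)
    nlinarith
  calc a * Real.log (a / b) ≥ a * (2 - 2 * s) := this
    _ = 2 * a - 2 * (a * s) := by ring
    _ = 2 * a - 2 * Real.sqrt (a * b) := by rw [has]

lemma KL_ge (p q : ℝ) (hp : p ∈ Set.Ioo (0 : ℝ) 1) (hq : q ∈ Set.Ioo (0 : ℝ) 1) :
    KL q p ≥ (p - q) ^ 2 / (2 * (p + q)) := by
  obtain ⟨hp0, hp1⟩ := hp
  obtain ⟨hq0, hq1⟩ := hq
  have h1 : KL q p ≥ 2 - 2 * Real.sqrt (q * p) - 2 * Real.sqrt ((1 - q) * (1 - p)) := by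
    have t1 := term_ge q p hq0 hp0
    have t2 := term_ge (1 - q) (1 - p) (by linarith) (by linarith)
    unfold KL
    linarith
  -- sqrt facts
  have sp := Real.sq_sqrt hp0.le
  have sq := Real.sq_sqrt hq0.le
  have sp' := Real.sqrt_nonneg p
  have sq' := Real.sqrt_nonneg q
  have hqp : Real.sqrt (q * p) = Real.sqrt q * Real.sqrt p := Real.sqrt_mul hq0.le p
  have h2 : 2 - 2 * Real.sqrt (q * p) - 2 * Real.sqrt ((1 - q) * (1 - p))
      ≥ (Real.sqrt q - Real.sqrt p) ^ 2 := by
    have s1 := Real.sq_sqrt (show (0:ℝ) ≤ 1 - q by linarith)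
    have s2 := Real.sq_sqrt (show (0:ℝ) ≤ 1 - p by linarith)
    have hm : Real.sqrt ((1 - q) * (1 - p)) = Real.sqrt (1 - q) * Real.sqrt (1 - p) :=
      Real.sqrt_mul (by linarith) _
    nlinarith [sq_nonneg (Real.sqrt (1 - q) - Real.sqrt (1 - p))]
  have h3 : (Real.sqrt q - Real.sqrt p) ^ 2 ≥ (p - q) ^ 2 / (2 * (p + q)) := by
    rw [ge_iff_le, div_le_iff₀ (by linarith)]
    nlinarith [sq_nonneg ((Real.sqrt q - Real.sqrt p) ^ 2),
      sq_nonneg (Real.sqrt q - Real.sqrt p), sq_nonneg (Real.sqrt q + Real.sqrt p)]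
  linarith

theorem stmt2 (p q : ℝ) (hp : p ∈ Set.Ioo (0 : ℝ) 1) (hq : q ∈ Set.Ioo (0 : ℝ) 1) :
    min (KL q p) (KL p q) ≥ (p - q) ^ 2 / (2 * (p + q)) := by
  refine le_min (KL_ge p q hp hq) ?_
  have := KL_ge q p hq hp
  have heq : (q - p) ^ 2 / (2 * (q + p)) = (p - q) ^ 2 / (2 * (p + q)) := by ring_nf
  linarith [heq ▸ this]
end

section
/- Let α₁, α₂ > 0 with weights β₁ = α₁/(α₁+α₂), β₂ = α₂/(α₁+α₂), and let 0 < q < p with p/q ≥ 1+ε for some ε > 0. Then α₁p + α₂q − (α₁+α₂)p^{β₁}q^{β₂} ≥ c(ε, β₁)·p for some constant c(ε, β₁) > 0 depending only on ε and β₁. -/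
open Real

/-- Quantitative weighted AM-GM gap: with normalized weights `β₁` and `β₂ = 1 - β₁`,
the gap `β₁ p + β₂ q - p ^ β₁ * q ^ β₂` is at least `c · p` for a constant
`c = c(ε, β₁) > 0` depending only on `ε` and `β₁`.  (For general `α₁, α₂ > 0` the gap
`α₁ p + α₂ q - (α₁+α₂) p^{β₁} q^{β₂}` is `(α₁+α₂)` times this normalized gap.) -/
theorem stmt5 (ε β₁ : ℝ) (hε : 0 < ε) (hβ₁ : 0 < β₁) (hβ₁' : β₁ < 1) :
    ∃ c > 0, ∀ p q : ℝ, 0 < q → q < p → p ≤ 1 → p / q ≥ 1 + ε →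
      β₁ * p + (1 - β₁) * q - p ^ β₁ * q ^ (1 - β₁) ≥ c * p := by
  set t₀ : ℝ := 1 / (1 + ε) with ht₀def
  have ht₀pos : 0 < t₀ := by positivity
  have ht₀lt : t₀ < 1 := by
    rw [ht₀def, div_lt_one (by linarith)]; linarith
  set A : ℝ := t₀ ^ (1 - β₁) with hAdef
  have hApos : 0 < A := rpow_pos_of_pos ht₀pos _
  -- strict Bernoulli at t₀ gives positivity of c
  have hbern : A < 1 + (1 - β₁) * (t₀ - 1) := by
    have := rpow_one_add_lt_one_add_mul_self (s := t₀ - 1) (p := 1 - β₁)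
      (by linarith) (by intro h; apply absurd ht₀lt; simp [sub_eq_zero] at h; simp [h])
      (by linarith) (by linarith)
    simpa using this
  have hcpos : 0 < β₁ + (1 - β₁) * t₀ - A := by nlinarith
  -- A ≥ t₀ since t₀ ≤ 1 and exponent ≤ 1
  have hAget₀ : t₀ ≤ A := by
    calc t₀ = t₀ ^ (1 : ℝ) := (rpow_one t₀).symm
    _ ≤ t₀ ^ (1 - β₁) := rpow_le_rpow_of_exponent_ge ht₀pos ht₀lt.le (by linarith)
  refine ⟨β₁ + (1 - β₁) * t₀ - A, hcpos, fun p q hq hqp hp1 hratio => ?_⟩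
  have hp : 0 < p := hq.trans hqp
  set t : ℝ := q / p with htdef
  have htpos : 0 < t := by positivity
  have htle : t ≤ t₀ := by
    rw [htdef, ht₀def, div_le_div_iff₀ hp (by linarith)]
    have hpq : (1 + ε) * q ≤ p := by
      rw [ge_iff_le, le_div_iff₀ hq] at hratio; linarith [hratio]
    nlinarith
  -- rewrite the geometric mean using t
  have hqt : q = p * t := by rw [htdef]; field_simp
  have hgm : p ^ β₁ * q ^ (1 - β₁) = p * t ^ (1 - β₁) := by
    rw [hqt, mul_rpow hp.le htpos.le, ← mul_assoc, ← rpow_add hp]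
    norm_num
  -- Bernoulli tangent bound: t ^ (1-β₁) ≤ A * (1 + (1-β₁)*(t/t₀ - 1))
  have hu : t ^ (1 - β₁) ≤ A * (1 + (1 - β₁) * (t / t₀ - 1)) := by
    have hsplit : t ^ (1 - β₁) = A * (t / t₀) ^ (1 - β₁) := by
      rw [hAdef, ← mul_rpow ht₀pos.le (by positivity)]
      congr 1
      field_simp
    rw [hsplit]
    have hb := rpow_one_add_le_one_add_mul_self (s := t / t₀ - 1) (p := 1 - β₁)
      (by nlinarith [div_nonneg htpos.le ht₀pos.le]) (by linarith) (by linarith)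
    have : (t / t₀) ^ (1 - β₁) ≤ 1 + (1 - β₁) * (t / t₀ - 1) := by simpa using hb
    exact mul_le_mul_of_nonneg_left this hApos.le
  -- put it together
  rw [hgm, hqt, ge_iff_le]
  have hkey : β₁ + (1 - β₁) * t - t ^ (1 - β₁) ≥ β₁ + (1 - β₁) * t₀ - A := by
    have hAt₀ : A * (1 + (1 - β₁) * (t / t₀ - 1)) = A + (1 - β₁) * (A / t₀) * (t - t₀) := by
      field_simp
    have hB : 1 ≤ A / t₀ := (one_le_div ht₀pos).mpr hAget₀
    nlinarith [hu, mul_nonneg (mul_nonneg (by linarith : (0:ℝ) ≤ 1 - β₁)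
      (by linarith : (0:ℝ) ≤ t₀ - t)) (by linarith : (0:ℝ) ≤ A / t₀ - 1)]
  nlinarith [hkey, hp]
end
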